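/- There exists a quaternate Dyck crossword picture that is not neutralizable; hence DN₁ is strictly included in DQ₁. In particular, there is a picture in DQ₁ containing two rectangles α, β with α ≺ β and β ≺ α in the precedence relation. -/

import Mathlib

/-- The alphabet Δ₁ = {a, b, c, d}. -/
inductive Del : Type
  | a | b | c | d
deriving DecidableEq

/-- Row cancellation: pairs [a,b] and [c,d]. -/
def rowStep (w w' : List Del) : Prop :=
  ∃ (u v : List Del),
    (w = u ++ [Del.a, Del.b] ++ v ∨ w = u ++ [Del.c, Del.d] ++ v) ∧ w' = u ++ v

/-- The row Dyck language D^Row. -/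
def DRow (w : List Del) : Prop := Relation.ReflTransGen rowStep w []

/-- Column cancellation: pairs [a,c] and [b,d]. -/
def colStep (w w' : List Del) : Prop :=
  ∃ (u v : List Del),
    (w = u ++ [Del.a, Del.c] ++ v ∨ w = u ++ [Del.b, Del.d] ++ v) ∧ w' = u ++ v

/-- The column Dyck language D^Col. -/
def DCol (w : List Del) : Prop := Relation.ReflTransGen colStep w []

/-- Row i (of length n) of a picture. -/
def row (p : ℕ → ℕ → Del) (n i : ℕ) : List Del := (List.range n).map (p i)

/-- Column j (of length m) of a picture. -/
def col (p : ℕ → ℕ → Del) (m j : ℕ) : List Del :=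
  (List.range m).map (fun i => p i j)

/-- The Dyck crossword language DC₁: nonempty pictures all of whose rows
are in D^Row and all of whose columns are in D^Col. -/
def DC (m n : ℕ) (p : ℕ → ℕ → Del) : Prop :=
  1 ≤ m ∧ 1 ≤ n ∧ (∀ i < m, DRow (row p n i)) ∧ (∀ j < n, DCol (col p m j))

/-- Positions `j < j'` match in a row word: the letters form a row matching
pair ([a,b] or [c,d]) and the factor strictly between them is in D^Row. -/
def rowMatchW (w : List Del) (j j' : ℕ) : Prop :=
  j < j' ∧ j' < w.length ∧
    ((w[j]? = some Del.a ∧ w[j']? = some Del.b) ∨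
      (w[j]? = some Del.c ∧ w[j']? = some Del.d)) ∧
    DRow ((w.drop (j + 1)).take (j' - (j + 1)))

/-- Positions `i < i'` match in a column word: the letters form a column
matching pair ([a,c] or [b,d]) and the factor strictly between them is in
D^Col. -/
def colMatchW (w : List Del) (i i' : ℕ) : Prop :=
  i < i' ∧ i' < w.length ∧
    ((w[i]? = some Del.a ∧ w[i']? = some Del.c) ∨
      (w[i]? = some Del.b ∧ w[i']? = some Del.d)) ∧
    DCol ((w.drop (i + 1)).take (i' - (i + 1)))

/-- Row edge of the matching graph of picture `p` (of size m×n) between cells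
`u` and `v`: same row, matched positions (in either order). -/
def rowEdge (p : ℕ → ℕ → Del) (n : ℕ) (u v : ℕ × ℕ) : Prop :=
  u.1 = v.1 ∧ (rowMatchW (row p n u.1) u.2 v.2 ∨ rowMatchW (row p n u.1) v.2 u.2)

/-- Column edge of the matching graph between cells `u` and `v`. -/
def colEdge (p : ℕ → ℕ → Del) (m : ℕ) (u v : ℕ × ℕ) : Prop :=
  u.2 = v.2 ∧ (colMatchW (col p m u.2) u.1 v.1 ∨ colMatchW (col p m u.2) v.1 u.1)

/-- Adjacency in the matching graph. -/
def adj (p : ℕ → ℕ → Del) (m n : ℕ) (u v : ℕ × ℕ) : Prop :=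
  rowEdge p n u v ∨ colEdge p m u v

/-- The alphabet Δ₁ ∪ {N}. -/
inductive DelN : Type
  | a | b | c | d | N
deriving DecidableEq

def embed : Del → DelN
  | Del.a => DelN.a
  | Del.b => DelN.b
  | Del.c => DelN.c
  | Del.d => DelN.d

/-- One neutralization step inside an m×n picture: a subpicture of size at
least 2×2 whose four corners are a, b, c, d and whose remaining cells are
all N is replaced by an all-N subpicture. -/
def nstep (m n : ℕ) (q q' : ℕ → ℕ → DelN) : Prop :=
  ∃ (i j i' j' : ℕ), i < i' ∧ j < j' ∧ i' < m ∧ j' < n ∧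
    q i j = DelN.a ∧ q i j' = DelN.b ∧ q i' j = DelN.c ∧ q i' j' = DelN.d ∧
    (∀ r s, i ≤ r → r ≤ i' → j ≤ s → s ≤ j' →
      ¬((r = i ∨ r = i') ∧ (s = j ∨ s = j')) → q r s = DelN.N) ∧
    (∀ r s, (i ≤ r ∧ r ≤ i' ∧ j ≤ s ∧ s ≤ j') → q' r s = DelN.N) ∧
    (∀ r s, ¬(i ≤ r ∧ r ≤ i' ∧ j ≤ s ∧ s ≤ j') → q' r s = q r s)

/-- The neutralizable Dyck language DN₁: nonempty pictures over Δ₁ that can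
be transformed into the all-N picture by neutralization steps. -/
def DN (m n : ℕ) (p : ℕ → ℕ → Del) : Prop :=
  1 ≤ m ∧ 1 ≤ n ∧
    ∃ q : ℕ → ℕ → DelN,
      Relation.ReflTransGen (nstep m n) (fun r s => embed (p r s)) q ∧
      ∀ r < m, ∀ s < n, q r s = DelN.N

/-- `(r, s)` is a corner of the rectangle `R = (i, j, i', j')`. -/
def cornerOf (R : ℕ × ℕ × ℕ × ℕ) (r s : ℕ) : Prop :=
  (r = R.1 ∨ r = R.2.2.1) ∧ (s = R.2.1 ∨ s = R.2.2.2)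

/-- `(r, s)` lies inside the bounding box of rectangle `R` or on its sides. -/
def inBox (R : ℕ × ℕ × ℕ × ℕ) (r s : ℕ) : Prop :=
  R.1 ≤ r ∧ r ≤ R.2.2.1 ∧ R.2.1 ≤ s ∧ s ≤ R.2.2.2

/-- `R = (i, j, i', j')` is a rectangle (length-4 circuit) of the matching
graph of picture `p`: its four sides are row and column matching edges. -/
def IsRect (m n : ℕ) (p : ℕ → ℕ → Del) (R : ℕ × ℕ × ℕ × ℕ) : Prop :=
  R.1 < R.2.2.1 ∧ R.2.1 < R.2.2.2 ∧ R.2.2.1 < m ∧ R.2.2.2 < n ∧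
  rowMatchW (row p n R.1) R.2.1 R.2.2.2 ∧
  rowMatchW (row p n R.2.2.1) R.2.1 R.2.2.2 ∧
  colMatchW (col p m R.2.1) R.1 R.2.2.1 ∧
  colMatchW (col p m R.2.2.2) R.1 R.2.2.1

/-- The quaternate Dyck language DQ₁: DC₁ pictures all of whose matching
circuits have length 4, i.e. each cell is a corner of a rectangle. -/
def DQ (m n : ℕ) (p : ℕ → ℕ → Del) : Prop :=
  DC m n p ∧
    ∀ r < m, ∀ s < n, ∃ R, IsRect m n p R ∧ cornerOf R r s

/-- Rectangle `α` has priority over rectangle `β` (α must be neutralized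
before β): some corner of `α` falls inside `β`'s bounding box or on its
sides. -/
def prio (m n : ℕ) (p : ℕ → ℕ → Del) (α β : ℕ × ℕ × ℕ × ℕ) : Prop :=
  IsRect m n p α ∧ IsRect m n p β ∧ α ≠ β ∧
    ∃ r s, cornerOf α r s ∧ inBox β r s

/-- The precedence relation ≺: transitive closure of priority. -/
def prec (m n : ℕ) (p : ℕ → ℕ → Del) : (ℕ × ℕ × ℕ × ℕ) → (ℕ × ℕ × ℕ × ℕ) → Prop :=
  Relation.TransGen (prio m n p)

namespace DyckAux

set_option linter.constructorNameAsVariable false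

/-! ### Generic one-dimensional Dyck machinery -/

section Gen

variable (po : Del → Option Del)

def run : List Del → List Del → Option (List Del)
  | [], S => some S
  | x :: w, S =>
    match po x, S with
    | some c, _ => run w (c :: S)
    | none, [] => none
    | none, c :: S' => if x = c then run w S' else none

lemma run_append (u v S) :
    run po (u ++ v) S = (run po u S).bind (fun S' => run po v S') := by
  induction u generalizing S with
  | nil => rfl
  | cons x u ih =>
    cases hx : po x with
    | some c => simp [run, hx, ih]
    | none =>
      cases S with
      | nil => simp [run, hx]
      | cons c S' =>
        by_cases hxc : x = c
        · subst hxc; simp [run, hx, ih]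
        · simp [run, hx, hxc]

variable {step : List Del → List Del → Prop}

lemma run_pair (hpo : ∀ x y, po x = some y → po y = none)
    {x y : Del} (hxy : po x = some y) (S : List Del) :
    run po [x, y] S = some S := by
  simp [run, hxy, hpo _ _ hxy]

lemma gd_run
    (hstep : ∀ w w', step w w' ↔
      ∃ u v x y, po x = some y ∧ w = u ++ [x, y] ++ v ∧ w' = u ++ v)
    (hpo : ∀ x y, po x = some y → po y = none)
    {w : List Del} (h : Relation.ReflTransGen step w []) :
    ∀ S, run po w S = some S := by
  induction h using Relation.ReflTransGen.head_induction_on with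
  | refl => intro S; rfl
  | head hs hrest ih =>
    obtain ⟨u, v, x, y, hxy, rfl, rfl⟩ := (hstep _ _).mp hs
    intro S
    have h1 := ih S
    rw [run_append] at h1
    cases hru : run po u S with
    | none => rw [hru] at h1; simp at h1
    | some S1 =>
      rw [hru] at h1
      simp only [Option.bind_some] at h1
      rw [List.append_assoc, run_append, hru, Option.bind_some, run_append,
        run_pair po hpo hxy, Option.bind_some]
      exact h1

lemma gd_insert
    (hstep : ∀ w w', step w w' ↔
      ∃ u v x y, po x = some y ∧ w = u ++ [x, y] ++ v ∧ w' = u ++ v)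
    {u v : List Del} {x y : Del}
    (h : Relation.ReflTransGen step (u ++ v) []) (hxy : po x = some y) :
    Relation.ReflTransGen step (u ++ [x, y] ++ v) [] :=
  Relation.ReflTransGen.head ((hstep _ _).mpr ⟨u, v, x, y, hxy, rfl, rfl⟩) h

lemma gd_no_closer
    (hstep : ∀ w w', step w w' ↔
      ∃ u v x y, po x = some y ∧ w = u ++ [x, y] ++ v ∧ w' = u ++ v)
    (hpo : ∀ x y, po x = some y → po y = none)
    {F G : List Del} {x y : Del}
    (hF : Relation.ReflTransGen step F [])
    (hFG : Relation.ReflTransGen step (F ++ y :: G) [])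
    (hxy : po x = some y) : False := by
  have h1 := gd_run po hstep hpo hF []
  have h2 := gd_run po hstep hpo hFG []
  rw [run_append, h1, Option.bind_some] at h2
  rw [show y :: G = [y] ++ G from rfl, run_append] at h2
  simp [run, hpo _ _ hxy] at h2

lemma gd_no_opener
    (hstep : ∀ w w', step w w' ↔
      ∃ u v x y, po x = some y ∧ w = u ++ [x, y] ++ v ∧ w' = u ++ v)
    (hpo : ∀ x y, po x = some y → po y = none)
    {F P : List Del} {x y : Del}
    (hF : Relation.ReflTransGen step F [])
    (hxy : po x = some y)
    (hP : Relation.ReflTransGen step (P ++ x :: F) []) : False := by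
  have h2 := gd_run po hstep hpo hP []
  rw [run_append] at h2
  cases hru : run po P [] with
  | none => rw [hru] at h2; simp at h2
  | some S =>
    rw [hru, Option.bind_some, show x :: F = [x] ++ F from rfl, run_append] at h2
    have : run po [x] S = some (y :: S) := by simp [run, hxy]
    rw [this, Option.bind_some, gd_run po hstep hpo hF (y :: S)] at h2
    simp at h2

end Gen

end DyckAux
namespace DyckAux

/-! ### Instances for rows and columns -/

def rowPO : Del → Option Del
  | Del.a => some Del.b
  | Del.c => some Del.d
  | _ => none

def colPO : Del → Option Del
  | Del.a => some Del.c
  | Del.b => some Del.d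
  | _ => none

lemma rowStep_iff : ∀ w w', rowStep w w' ↔
    ∃ u v x y, rowPO x = some y ∧ w = u ++ [x, y] ++ v ∧ w' = u ++ v := by
  intro w w'
  constructor
  · rintro ⟨u, v, h | h, rfl⟩
    · exact ⟨u, v, Del.a, Del.b, rfl, h, rfl⟩
    · exact ⟨u, v, Del.c, Del.d, rfl, h, rfl⟩
  · rintro ⟨u, v, x, y, hxy, rfl, rfl⟩
    cases x <;> simp only [rowPO, Option.some.injEq, reduceCtorEq] at hxy <;> subst hxy
    · exact ⟨u, v, Or.inl rfl, rfl⟩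
    · exact ⟨u, v, Or.inr rfl, rfl⟩

lemma colStep_iff : ∀ w w', colStep w w' ↔
    ∃ u v x y, colPO x = some y ∧ w = u ++ [x, y] ++ v ∧ w' = u ++ v := by
  intro w w'
  constructor
  · rintro ⟨u, v, h | h, rfl⟩
    · exact ⟨u, v, Del.a, Del.c, rfl, h, rfl⟩
    · exact ⟨u, v, Del.b, Del.d, rfl, h, rfl⟩
  · rintro ⟨u, v, x, y, hxy, rfl, rfl⟩
    cases x <;> simp only [colPO, Option.some.injEq, reduceCtorEq] at hxy <;> subst hxy
    · exact ⟨u, v, Or.inl rfl, rfl⟩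
    · exact ⟨u, v, Or.inr rfl, rfl⟩

lemma rowPO_closer : ∀ x y, rowPO x = some y → rowPO y = none := by
  intro x y h; cases x <;> cases y <;> simp_all [rowPO]

lemma colPO_closer : ∀ x y, colPO x = some y → colPO y = none := by
  intro x y h; cases x <;> cases y <;> simp_all [colPO]

lemma DRow_insert {u v : List Del} {x y : Del} (h : DRow (u ++ v))
    (hxy : rowPO x = some y) : DRow (u ++ [x, y] ++ v) :=
  gd_insert rowPO rowStep_iff h hxy

lemma DCol_insert {u v : List Del} {x y : Del} (h : DCol (u ++ v))
    (hxy : colPO x = some y) : DCol (u ++ [x, y] ++ v) :=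
  gd_insert colPO colStep_iff h hxy

/-! ### A certified checker for concrete words -/

def cancel1 (po : Del → Option Del) : List Del → Option (List Del)
  | x :: y :: w =>
    match po x with
    | some c => if y = c then some w else (cancel1 po (y :: w)).map (x :: ·)
    | none => (cancel1 po (y :: w)).map (x :: ·)
  | _ => none

lemma cancel1_spec (po : Del → Option Del) :
    ∀ w w', cancel1 po w = some w' →
      ∃ u v x y, po x = some y ∧ w = u ++ [x, y] ++ v ∧ w' = u ++ v := by
  intro w
  induction w with
  | nil => intro w' h; simp [cancel1] at h
  | cons x t ih =>
    intro w' h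
    cases t with
    | nil => simp [cancel1] at h
    | cons y w =>
      rw [cancel1] at h
      cases hx : po x with
      | some c =>
        rw [hx] at h
        by_cases hyc : y = c
        · subst hyc
          simp at h
          exact ⟨[], w, x, y, hx, rfl, by simp [h]⟩
        · simp only [if_neg hyc, Option.map_eq_some_iff] at h
          obtain ⟨w1, hw1, rfl⟩ := h
          obtain ⟨u, v, x', y', hxy', heq, rfl⟩ := ih w1 hw1
          exact ⟨x :: u, v, x', y', hxy', by simp [heq], rfl⟩
      | none =>
        rw [hx] at h
        simp only [Option.map_eq_some_iff] at h
        obtain ⟨w1, hw1, rfl⟩ := h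
        obtain ⟨u, v, x', y', hxy', heq, rfl⟩ := ih w1 hw1
        exact ⟨x :: u, v, x', y', hxy', by simp [heq], rfl⟩

def chk (po : Del → Option Del) : ℕ → List Del → Bool
  | _, [] => true
  | 0, _ :: _ => false
  | k + 1, x :: w =>
    match cancel1 po (x :: w) with
    | some w' => chk po k w'
    | none => false

lemma chk_sound {po : Del → Option Del} {step : List Del → List Del → Prop}
    (hstep : ∀ w w', step w w' ↔
      ∃ u v x y, po x = some y ∧ w = u ++ [x, y] ++ v ∧ w' = u ++ v) :
    ∀ k w, chk po k w = true → Relation.ReflTransGen step w [] := by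
  intro k
  induction k with
  | zero =>
    intro w h
    cases w with
    | nil => exact Relation.ReflTransGen.refl
    | cons x t => simp [chk] at h
  | succ k ih =>
    intro w h
    cases w with
    | nil => exact Relation.ReflTransGen.refl
    | cons x t =>
      rw [chk] at h
      cases hc : cancel1 po (x :: t) with
      | none => rw [hc] at h; simp at h
      | some w' =>
        rw [hc] at h
        exact Relation.ReflTransGen.head
          ((hstep _ _).mpr (cancel1_spec po _ _ hc)) (ih w' h)

lemma DRow_of_chk {k : ℕ} {w : List Del} (h : chk rowPO k w = true) : DRow w :=
  chk_sound rowStep_iff k w h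

lemma DCol_of_chk {k : ℕ} {w : List Del} (h : chk colPO k w = true) : DCol w :=
  chk_sound colStep_iff k w h

end DyckAux
namespace DyckAux

set_option linter.constructorNameAsVariable false

/-! ### Segments -/

def seg {α : Type} (f : ℕ → α) (lo hi : ℕ) : List α :=
  (List.range' lo (hi - lo)).map f

lemma seg_append {α : Type} (f : ℕ → α) {lo mid hi : ℕ}
    (h1 : lo ≤ mid) (h2 : mid ≤ hi) :
    seg f lo hi = seg f lo mid ++ seg f mid hi := by
  unfold seg
  rw [← List.map_append]
  congr 1
  have h3 : hi - lo = (mid - lo) + (hi - mid) := by omega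
  have h4 : lo + (mid - lo) = mid := by omega
  rw [h3, ← List.range'_append_1, h4]

lemma seg_single {α : Type} (f : ℕ → α) (j : ℕ) : seg f j (j + 1) = [f j] := by
  simp [seg]

lemma seg_congr {α : Type} {f g : ℕ → α} {lo hi : ℕ}
    (h : ∀ s, lo ≤ s → s < hi → f s = g s) : seg f lo hi = seg g lo hi := by
  unfold seg
  apply List.map_congr_left
  intro s hs
  rw [List.mem_range'_1] at hs
  exact h s hs.1 (by omega)

lemma seg_length {α : Type} (f : ℕ → α) (lo hi : ℕ) :
    (seg f lo hi).length = hi - lo := by simp [seg]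

/-- `row`/`col` as segments. -/
lemma row_eq_seg (p : ℕ → ℕ → Del) (n i : ℕ) : row p n i = seg (p i) 0 n := by
  simp [row, seg, List.range_eq_range']

lemma col_eq_seg (p : ℕ → ℕ → Del) (m j : ℕ) :
    col p m j = seg (fun r => p r j) 0 m := by
  simp [col, seg, List.range_eq_range']

lemma drop_take_seg {α : Type} (f : ℕ → α) (n k t : ℕ) (h : k + t ≤ n) :
    (((List.range n).map f).drop k).take t = seg f k (k + t) := by
  have hs : List.range n = List.range' 0 k ++ List.range' k (n - k) := by
    rw [List.range_eq_range']
    have h1 : n = k + (n - k) := by omega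
    rw [h1, ← List.range'_append_1]
    simp
  have hs2 : List.range' k (n - k) = List.range' k t ++ List.range' (k + t) (n - k - t) := by
    have h1 : n - k = t + (n - k - t) := by omega
    rw [h1, ← List.range'_append_1]
    have h2 : t + (n - k - t) - t = n - k - t := by omega
    rw [h2]
  rw [hs, List.map_append, List.drop_left' (by simp), hs2, List.map_append,
    List.take_left' (by simp)]
  have : k + t - k = t := by omega
  simp [seg, this]

/-! ### Matching uniqueness -/

section Uniq

variable {po : Del → Option Del} {step : List Del → List Del → Prop}

lemma uniq_right
    (hstep : ∀ w w', step w w' ↔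
      ∃ u v x y, po x = some y ∧ w = u ++ [x, y] ++ v ∧ w' = u ++ v)
    (hpo : ∀ x y, po x = some y → po y = none) {f : ℕ → Del} {j j1 j2 : ℕ}
    (hm1 : po (f j) = some (f j1)) (hj1 : j < j1)
    (hd1 : Relation.ReflTransGen step (seg f (j + 1) j1) [])
    (hm2 : po (f j) = some (f j2)) (hj2 : j < j2)
    (hd2 : Relation.ReflTransGen step (seg f (j + 1) j2) []) : j1 = j2 := by
  rcases lt_trichotomy j1 j2 with h | h | h
  · exfalso
    have hsplit : seg f (j + 1) j2 =
        seg f (j + 1) j1 ++ f j1 :: seg f (j1 + 1) j2 := by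
      rw [seg_append f (by omega : j + 1 ≤ j1) (by omega : j1 ≤ j2),
        seg_append f (by omega : j1 ≤ j1 + 1) (by omega : j1 + 1 ≤ j2),
        seg_single]
      simp
    rw [hsplit] at hd2
    exact gd_no_closer po hstep hpo hd1 hd2 hm1
  · exact h
  · exfalso
    have hsplit : seg f (j + 1) j1 =
        seg f (j + 1) j2 ++ f j2 :: seg f (j2 + 1) j1 := by
      rw [seg_append f (by omega : j + 1 ≤ j2) (by omega : j2 ≤ j1),
        seg_append f (by omega : j2 ≤ j2 + 1) (by omega : j2 + 1 ≤ j1),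
        seg_single]
      simp
    rw [hsplit] at hd1
    exact gd_no_closer po hstep hpo hd2 hd1 hm2

lemma uniq_left
    (hstep : ∀ w w', step w w' ↔
      ∃ u v x y, po x = some y ∧ w = u ++ [x, y] ++ v ∧ w' = u ++ v)
    (hpo : ∀ x y, po x = some y → po y = none)
    {f : ℕ → Del} {j' j1 j2 : ℕ}
    (hm1 : po (f j1) = some (f j')) (hj1 : j1 < j')
    (hd1 : Relation.ReflTransGen step (seg f (j1 + 1) j') [])
    (hm2 : po (f j2) = some (f j')) (hj2 : j2 < j')
    (hd2 : Relation.ReflTransGen step (seg f (j2 + 1) j') []) : j1 = j2 := by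
  rcases lt_trichotomy j1 j2 with h | h | h
  · exfalso
    have hsplit : seg f (j1 + 1) j' =
        seg f (j1 + 1) j2 ++ f j2 :: seg f (j2 + 1) j' := by
      rw [seg_append f (by omega : j1 + 1 ≤ j2) (by omega : j2 ≤ j'),
        seg_append f (by omega : j2 ≤ j2 + 1) (by omega : j2 + 1 ≤ j'),
        seg_single]
      simp
    rw [hsplit] at hd1
    exact gd_no_opener po hstep hpo hd2 hm2 hd1
  · exact h
  · exfalso
    have hsplit : seg f (j2 + 1) j' =
        seg f (j2 + 1) j1 ++ f j1 :: seg f (j1 + 1) j' := by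
      rw [seg_append f (by omega : j2 + 1 ≤ j1) (by omega : j1 ≤ j'),
        seg_append f (by omega : j1 ≤ j1 + 1) (by omega : j1 + 1 ≤ j'),
        seg_single]
      simp
    rw [hsplit] at hd2
    exact gd_no_opener po hstep hpo hd1 hm1 hd2

end Uniq

end DyckAux
namespace DyckAux

set_option linter.constructorNameAsVariable false

/-! ### DelN basics -/

def toDel? : DelN → Option Del
  | DelN.a => some Del.a
  | DelN.b => some Del.b
  | DelN.c => some Del.c
  | DelN.d => some Del.d
  | DelN.N => none

def eraseN (l : List DelN) : List Del := l.filterMap toDel?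

lemma toDel?_embed (x : Del) : toDel? (embed x) = some x := by cases x <;> rfl

lemma embed_ne_N (x : Del) : embed x ≠ DelN.N := by cases x <;> simp [embed]

lemma embed_eq_a {x : Del} (h : embed x = DelN.a) : x = Del.a := by
  cases x <;> simp_all [embed]
lemma embed_eq_b {x : Del} (h : embed x = DelN.b) : x = Del.b := by
  cases x <;> simp_all [embed]
lemma embed_eq_c {x : Del} (h : embed x = DelN.c) : x = Del.c := by
  cases x <;> simp_all [embed]
lemma embed_eq_d {x : Del} (h : embed x = DelN.d) : x = Del.d := by
  cases x <;> simp_all [embed]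

lemma eraseN_append (l1 l2 : List DelN) :
    eraseN (l1 ++ l2) = eraseN l1 ++ eraseN l2 := List.filterMap_append

lemma eraseN_allN {l : List DelN} (h : ∀ x ∈ l, x = DelN.N) : eraseN l = [] := by
  induction l with
  | nil => rfl
  | cons x t ih =>
    have hx := h x (by simp)
    subst hx
    simp only [eraseN, List.filterMap_cons]
    exact ih fun y hy => h y (by simp [hy])

lemma eraseN_seg_N {F : ℕ → DelN} {lo hi : ℕ}
    (h : ∀ s, lo ≤ s → s < hi → F s = DelN.N) : eraseN (seg F lo hi) = [] := by
  apply eraseN_allN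
  intro x hx
  simp only [seg, List.mem_map] at hx
  obtain ⟨s, hs, rfl⟩ := hx
  rw [List.mem_range'_1] at hs
  exact h s hs.1 (by omega)

lemma eraseN_seg_embed (f : ℕ → Del) (lo hi : ℕ) :
    eraseN (seg (fun s => embed (f s)) lo hi) = seg f lo hi := by
  simp only [seg, eraseN, List.filterMap_map]
  have h1 : (toDel? ∘ fun s => embed (f s)) = some ∘ f := by
    funext s; simp [Function.comp, toDel?_embed]
  rw [h1, List.filterMap_eq_map]

end DyckAux
namespace DyckAux

set_option linter.constructorNameAsVariable false
set_option maxHeartbeats 1000000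

/-! ### Boxes and the invariant -/

/-- `(i,j,i',j')` is a matching rectangle of the (partially neutralized)
picture `q`. -/
def boxOK (m n : ℕ) (q : ℕ → ℕ → DelN) (i j i' j' : ℕ) : Prop :=
  i < i' ∧ j < j' ∧ i' < m ∧ j' < n ∧
  q i j = DelN.a ∧ q i j' = DelN.b ∧ q i' j = DelN.c ∧ q i' j' = DelN.d ∧
  DRow (eraseN (seg (q i) (j + 1) j')) ∧
  DRow (eraseN (seg (q i') (j + 1) j')) ∧
  DCol (eraseN (seg (fun r => q r j) (i + 1) i')) ∧
  DCol (eraseN (seg (fun r => q r j') (i + 1) i'))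

/-- Generic line transport: inserting a matched pair into a line. -/
lemma line_trans {F G : ℕ → DelN} {p1 p2 : ℕ} {x y : Del}
    (hp : p1 < p2) (hF1 : F p1 = embed x) (hF2 : F p2 = embed y)
    (hmid : ∀ s, p1 < s → s < p2 → F s = DelN.N)
    (hG : ∀ s, p1 ≤ s → s ≤ p2 → G s = DelN.N)
    (hout : ∀ s, ¬(p1 ≤ s ∧ s ≤ p2) → F s = G s)
    {lo hi : ℕ} (h1 : lo ≤ p1) (h2 : p2 < hi) :
    ∃ U V, eraseN (seg F lo hi) = U ++ [x, y] ++ V ∧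
      eraseN (seg G lo hi) = U ++ V := by
  refine ⟨eraseN (seg F lo p1), eraseN (seg F (p2 + 1) hi), ?_, ?_⟩
  · rw [seg_append F (show lo ≤ p1 by omega) (show p1 ≤ hi by omega),
      seg_append F (show p1 ≤ p1 + 1 by omega) (show p1 + 1 ≤ hi by omega),
      seg_append F (show p1 + 1 ≤ p2 by omega) (show p2 ≤ hi by omega),
      seg_append F (show p2 ≤ p2 + 1 by omega) (show p2 + 1 ≤ hi by omega),
      seg_single, seg_single, hF1, hF2]
    rw [eraseN_append, eraseN_append, eraseN_append, eraseN_append]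
    rw [eraseN_seg_N (lo := p1 + 1) (hi := p2) (fun s hs1 hs2 => hmid s (by omega) (by omega))]
    simp [eraseN, toDel?_embed]
  · rw [seg_append G (show lo ≤ p1 by omega) (show p1 ≤ hi by omega),
      seg_append G (show p1 ≤ p2 + 1 by omega) (show p2 + 1 ≤ hi by omega)]
    rw [eraseN_append, eraseN_append]
    rw [eraseN_seg_N (lo := p1) (hi := p2 + 1) (fun s hs1 hs2 => hG s (by omega) (by omega))]
    rw [seg_congr (fun s hs1 hs2 => (hout s (by omega)).symm),
      seg_congr (f := G) (g := F) (fun s hs1 hs2 => (hout s (by omega)).symm)]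
    simp

/-- Master transport lemma for one neutralization step. -/
lemma step_main {m n : ℕ} {q q' : ℕ → ℕ → DelN} (hst : nstep m n q q') :
    (∀ i, DRow (eraseN (seg (q' i) 0 n)) → DRow (eraseN (seg (q i) 0 n))) ∧
    (∀ j, DCol (eraseN (seg (fun r => q' r j) 0 m)) →
      DCol (eraseN (seg (fun r => q r j) 0 m))) ∧
    (∀ I J I' J', boxOK m n q' I J I' J' → boxOK m n q I J I' J') ∧
    (∃ i j i' j', boxOK m n q i j i' j' ∧
      (∀ r s, q r s ≠ q' r s → (r = i ∨ r = i') ∧ (s = j ∨ s = j')) ∧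
      (∀ r s, i ≤ r ∧ r ≤ i' ∧ j ≤ s ∧ s ≤ j' → q' r s = DelN.N) ∧
      (∀ r s, i ≤ r → r ≤ i' → j ≤ s → s ≤ j' →
        ¬((r = i ∨ r = i') ∧ (s = j ∨ s = j')) → q r s = DelN.N)) := by
  obtain ⟨i0, j0, i0', j0', hii, hjj, him, hjn, ha, hb, hc, hd, hint, hin, hout⟩ := hst
  -- pointwise equality away from the four corners
  have hpt : ∀ r s, ¬((r = i0 ∨ r = i0') ∧ (s = j0 ∨ s = j0')) → q r s = q' r s := by
    intro r s hcn
    by_cases hbx : i0 ≤ r ∧ r ≤ i0' ∧ j0 ≤ s ∧ s ≤ j0'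
    · rw [hint r s hbx.1 hbx.2.1 hbx.2.2.1 hbx.2.2.2 hcn, hin r s hbx]
    · exact (hout r s hbx).symm
  have hnotin : ∀ r s, q' r s ≠ DelN.N →
      ¬(i0 ≤ r ∧ r ≤ i0' ∧ j0 ≤ s ∧ s ≤ j0') :=
    fun r s h hbx => h (hin r s hbx)
  have hptc : ∀ r s, q' r s ≠ DelN.N → q r s = q' r s := by
    intro r s h
    refine hpt r s fun hcn => hnotin r s h ?_
    rcases hcn with ⟨h1 | h1, h2 | h2⟩ <;> subst h1 <;> subst h2 <;>
      exact ⟨by omega, by omega, by omega, by omega⟩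
  -- row transport
  have rowT : ∀ I0 lo hi,
      ((I0 = i0 ∨ I0 = i0') → (lo ≤ j0 ∧ j0' < hi) ∨
        (∀ s, lo ≤ s → s < hi → s ≠ j0 ∧ s ≠ j0')) →
      DRow (eraseN (seg (q' I0) lo hi)) → DRow (eraseN (seg (q I0) lo hi)) := by
    intro I0 lo hi hend hD
    by_cases hI : I0 = i0 ∨ I0 = i0'
    · rcases hend hI with he | he
      · -- insertion of a matched pair
        rcases hI with rfl | rfl
        · obtain ⟨U, V, hU, hV⟩ := line_trans (F := q I0) (G := q' I0)
            (x := Del.a) (y := Del.b) hjj ha hb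
            (fun s h1 h2 => hint I0 s (le_refl _) (by omega) (by omega) (by omega)
              (by intro hcn; omega))
            (fun s h1 h2 => hin I0 s ⟨le_refl _, by omega, h1, h2⟩)
            (fun s hs => hpt I0 s (by intro hcn; omega)) he.1 he.2
          rw [hU]; rw [hV] at hD
          exact DRow_insert hD rfl
        · obtain ⟨U, V, hU, hV⟩ := line_trans (F := q I0) (G := q' I0)
            (x := Del.c) (y := Del.d) hjj hc hd
            (fun s h1 h2 => hint I0 s (by omega) (le_refl _) (by omega) (by omega)
              (by intro hcn; omega))
            (fun s h1 h2 => hin I0 s ⟨by omega, le_refl _, h1, h2⟩)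
            (fun s hs => hpt I0 s (by intro hcn; omega)) he.1 he.2
          rw [hU]; rw [hV] at hD
          exact DRow_insert hD rfl
      · have hcongr : seg (q I0) lo hi = seg (q' I0) lo hi := by
          apply seg_congr
          intro s h1 h2
          apply hpt
          rintro ⟨-, h3⟩
          rcases he s h1 h2 with ⟨hn1, hn2⟩
          tauto
        rw [hcongr]; exact hD
    · have hcongr : seg (q I0) lo hi = seg (q' I0) lo hi := by
        apply seg_congr
        intro s h1 h2
        exact hpt I0 s (fun hcn => hI hcn.1)
      rw [hcongr]; exact hD
  -- column transport
  have colT : ∀ J0 lo hi,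
      ((J0 = j0 ∨ J0 = j0') → (lo ≤ i0 ∧ i0' < hi) ∨
        (∀ r, lo ≤ r → r < hi → r ≠ i0 ∧ r ≠ i0')) →
      DCol (eraseN (seg (fun r => q' r J0) lo hi)) →
      DCol (eraseN (seg (fun r => q r J0) lo hi)) := by
    intro J0 lo hi hend hD
    by_cases hJ : J0 = j0 ∨ J0 = j0'
    · rcases hend hJ with he | he
      · rcases hJ with rfl | rfl
        · obtain ⟨U, V, hU, hV⟩ := line_trans (F := fun r => q r J0)
            (G := fun r => q' r J0) (x := Del.a) (y := Del.c) hii ha hc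
            (fun r h1 h2 => hint r J0 (by omega) (by omega) (le_refl _) (by omega)
              (by intro hcn; omega))
            (fun r h1 h2 => hin r J0 ⟨h1, h2, le_refl _, by omega⟩)
            (fun r hr => hpt r J0 (by intro hcn; omega)) he.1 he.2
          rw [hU]; rw [hV] at hD
          exact DCol_insert hD rfl
        · obtain ⟨U, V, hU, hV⟩ := line_trans (F := fun r => q r J0)
            (G := fun r => q' r J0) (x := Del.b) (y := Del.d) hii hb hd
            (fun r h1 h2 => hint r J0 (by omega) (by omega) (by omega) (le_refl _)
              (by intro hcn; omega))
            (fun r h1 h2 => hin r J0 ⟨h1, h2, by omega, le_refl _⟩)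
            (fun r hr => hpt r J0 (by intro hcn; omega)) he.1 he.2
          rw [hU]; rw [hV] at hD
          exact DCol_insert hD rfl
      · have hcongr : seg (fun r => q r J0) lo hi = seg (fun r => q' r J0) lo hi := by
          apply seg_congr
          intro r h1 h2
          apply hpt
          rintro ⟨h3, -⟩
          rcases he r h1 h2 with ⟨hn1, hn2⟩
          tauto
        rw [hcongr]; exact hD
    · have hcongr : seg (fun r => q r J0) lo hi = seg (fun r => q' r J0) lo hi := by
        apply seg_congr
        intro r h1 h2
        exact hpt r J0 (fun hcn => hJ hcn.2)
      rw [hcongr]; exact hD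
  refine ⟨?_, ?_, ?_, ?_⟩
  · intro i hD
    exact rowT i 0 n (fun _ => Or.inl ⟨Nat.zero_le _, hjn⟩) hD
  · intro j hD
    exact colT j 0 m (fun _ => Or.inl ⟨Nat.zero_le _, him⟩) hD
  · rintro I J I' J' ⟨h1, h2, h3, h4, ha', hb', hc', hd', hr1, hr2, hc1, hc2⟩
    have hJno : ∀ I0, (I0 = i0 ∨ I0 = i0') → q' I0 J ≠ DelN.N ∨ True := fun _ _ => Or.inr trivial
    -- endpoints of the rectangle are not inside the step box
    have hIJ := hnotin I J (by rw [ha']; simp)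
    have hIJ' := hnotin I J' (by rw [hb']; simp)
    have hI'J := hnotin I' J (by rw [hc']; simp)
    have hI'J' := hnotin I' J' (by rw [hd']; simp)
    refine ⟨h1, h2, h3, h4, ?_, ?_, ?_, ?_, ?_, ?_, ?_, ?_⟩
    · rw [hptc I J (by rw [ha']; simp), ha']
    · rw [hptc I J' (by rw [hb']; simp), hb']
    · rw [hptc I' J (by rw [hc']; simp), hc']
    · rw [hptc I' J' (by rw [hd']; simp), hd']
    · refine rowT I (J + 1) J' ?_ hr1
      intro hI
      have hrng : i0 ≤ I ∧ I ≤ i0' := by rcases hI with rfl | rfl <;> omega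
      by_cases hcs : J < j0 ∧ j0' < J'
      · exact Or.inl ⟨by omega, by omega⟩
      · right; intro s hs1 hs2; constructor <;> omega
    · refine rowT I' (J + 1) J' ?_ hr2
      intro hI
      have hrng : i0 ≤ I' ∧ I' ≤ i0' := by rcases hI with rfl | rfl <;> omega
      by_cases hcs : J < j0 ∧ j0' < J'
      · exact Or.inl ⟨by omega, by omega⟩
      · right; intro s hs1 hs2; constructor <;> omega
    · refine colT J (I + 1) I' ?_ hc1
      intro hJ2
      have hrng : j0 ≤ J ∧ J ≤ j0' := by rcases hJ2 with rfl | rfl <;> omega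
      by_cases hcs : I < i0 ∧ i0' < I'
      · exact Or.inl ⟨by omega, by omega⟩
      · right; intro r hr1' hr2'; constructor <;> omega
    · refine colT J' (I + 1) I' ?_ hc2
      intro hJ2
      have hrng : j0 ≤ J' ∧ J' ≤ j0' := by rcases hJ2 with rfl | rfl <;> omega
      by_cases hcs : I < i0 ∧ i0' < I'
      · exact Or.inl ⟨by omega, by omega⟩
      · right; intro r hr1' hr2'; constructor <;> omega
  · refine ⟨i0, j0, i0', j0', ⟨hii, hjj, him, hjn, ha, hb, hc, hd, ?_, ?_, ?_, ?_⟩,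
      ?_, ?_, ?_⟩
    · rw [eraseN_seg_N (lo := j0 + 1) (hi := j0') (fun s h1 h2 => hint i0 s (le_refl _) (by omega) (by omega)
        (by omega) (by intro hcn; omega))]
      exact Relation.ReflTransGen.refl
    · rw [eraseN_seg_N (lo := j0 + 1) (hi := j0') (fun s h1 h2 => hint i0' s (by omega) (le_refl _) (by omega)
        (by omega) (by intro hcn; omega))]
      exact Relation.ReflTransGen.refl
    · rw [eraseN_seg_N (lo := i0 + 1) (hi := i0') (fun r h1 h2 => hint r j0 (by omega) (by omega) (le_refl _)
        (by omega) (by intro hcn; omega))]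
      exact Relation.ReflTransGen.refl
    · rw [eraseN_seg_N (lo := i0 + 1) (hi := i0') (fun r h1 h2 => hint r j0' (by omega) (by omega) (by omega)
        (le_refl _) (by intro hcn; omega))]
      exact Relation.ReflTransGen.refl
    · intro r s hne
      by_contra hcn
      exact hne (hpt r s hcn)
    · exact hin
    · exact hint

end DyckAux
namespace DyckAux

set_option linter.constructorNameAsVariable false
set_option maxHeartbeats 1000000

/-! ### The invariant along a neutralization reduction -/

def INV (m n : ℕ) (q : ℕ → ℕ → DelN) : Prop :=
  (∀ i < m, DRow (eraseN (seg (q i) 0 n))) ∧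
  (∀ j < n, DCol (eraseN (seg (fun r => q r j) 0 m))) ∧
  (∀ r < m, ∀ s < n, q r s ≠ DelN.N →
    ∃ i j i' j', boxOK m n q i j i' j' ∧ (r = i ∨ r = i') ∧ (s = j ∨ s = j'))

lemma inv_step {m n : ℕ} {q q' : ℕ → ℕ → DelN} (hst : nstep m n q q')
    (h : INV m n q') : INV m n q := by
  obtain ⟨rowT, colT, boxT, i0, j0, i0', j0', hbox0, hcorn0, hin0, hint0⟩ := step_main hst
  refine ⟨fun i hi => rowT i (h.1 i hi), fun j hj => colT j (h.2.1 j hj), ?_⟩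
  intro r hr s hs hne
  by_cases hq' : q' r s = DelN.N
  · have hc := hcorn0 r s (by rw [hq']; exact hne)
    exact ⟨i0, j0, i0', j0', hbox0, hc.1, hc.2⟩
  · obtain ⟨I, J, I', J', hb, hc1, hc2⟩ := h.2.2 r hr s hs hq'
    exact ⟨I, J, I', J', boxT _ _ _ _ hb, hc1, hc2⟩

lemma inv_of_red {m n : ℕ} {q qf : ℕ → ℕ → DelN}
    (hred : Relation.ReflTransGen (nstep m n) q qf)
    (hfin : ∀ r < m, ∀ s < n, qf r s = DelN.N) : INV m n q := by
  induction hred using Relation.ReflTransGen.head_induction_on with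
  | refl =>
    refine ⟨?_, ?_, ?_⟩
    · intro i hi
      rw [eraseN_seg_N (lo := 0) (hi := n) (fun s h1 h2 => hfin i hi s h2)]
      exact Relation.ReflTransGen.refl
    · intro j hj
      rw [eraseN_seg_N (lo := 0) (hi := m) (fun r h1 h2 => hfin r h2 j hj)]
      exact Relation.ReflTransGen.refl
    · intro r hr s hs hne
      exact absurd (hfin r hr s hs) hne
  | head hs hrest ih => exact inv_step hs ih

lemma boxOK_of_red {m n : ℕ} {q qmid : ℕ → ℕ → DelN}
    (hred : Relation.ReflTransGen (nstep m n) q qmid)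
    {I J I' J' : ℕ} (hb : boxOK m n qmid I J I' J') : boxOK m n q I J I' J' := by
  induction hred using Relation.ReflTransGen.head_induction_on with
  | refl => exact hb
  | head hs hrest ih => exact (step_main hs).2.2.1 _ _ _ _ ih

/-! ### Bridge between `boxOK` for the initial picture and `IsRect` -/

lemma row_get? (p : ℕ → ℕ → Del) (n i j : ℕ) (hj : j < n) :
    (row p n i)[j]? = some (p i j) := by
  simp [row, List.getElem?_map, List.getElem?_range hj]

lemma col_get? (p : ℕ → ℕ → Del) (m j i : ℕ) (hi : i < m) :
    (col p m j)[i]? = some (p i j) := by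
  simp [col, List.getElem?_range hi]

lemma row_factor (p : ℕ → ℕ → Del) {n i j j' : ℕ} (hj : j < j') (hj' : j' < n) :
    ((row p n i).drop (j + 1)).take (j' - (j + 1)) = seg (p i) (j + 1) j' := by
  have h := drop_take_seg (p i) n (j + 1) (j' - (j + 1)) (by omega)
  rw [row]
  rw [h]
  congr 1
  omega

lemma col_factor (p : ℕ → ℕ → Del) {m j i i' : ℕ} (hi : i < i') (hi' : i' < m) :
    ((col p m j).drop (i + 1)).take (i' - (i + 1)) = seg (fun r => p r j) (i + 1) i' := by
  have h := drop_take_seg (fun r => p r j) m (i + 1) (i' - (i + 1)) (by omega)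
  rw [col]
  rw [h]
  congr 1
  omega

/-- The initial embedded picture. -/
def emb (p : ℕ → ℕ → Del) : ℕ → ℕ → DelN := fun r s => embed (p r s)

lemma rowMatchW_iff (p : ℕ → ℕ → Del) {n i j j' : ℕ} (hj : j < j') (hj' : j' < n) :
    rowMatchW (row p n i) j j' ↔
      (rowPO (p i j) = some (p i j') ∧ DRow (seg (p i) (j + 1) j')) := by
  unfold rowMatchW
  rw [row_get? p n i j (by omega), row_get? p n i j' hj', row_factor p hj hj']
  constructor
  · rintro ⟨-, -, h3 | h3, h4⟩
    · obtain ⟨ha1, ha2⟩ := h3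
      simp only [Option.some.injEq] at ha1 ha2
      rw [ha1, ha2]; exact ⟨rfl, h4⟩
    · obtain ⟨ha1, ha2⟩ := h3
      simp only [Option.some.injEq] at ha1 ha2
      rw [ha1, ha2]; exact ⟨rfl, h4⟩
  · rintro ⟨h1, h2⟩
    refine ⟨hj, by simp [row]; omega, ?_, h2⟩
    rcases hx : p i j with _ | _ | _ | _ <;> rw [hx] at h1 <;>
      simp [rowPO] at h1 <;> simp [hx, ← h1]

lemma colMatchW_iff (p : ℕ → ℕ → Del) {m j i i' : ℕ} (hi : i < i') (hi' : i' < m) :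
    colMatchW (col p m j) i i' ↔
      (colPO (p i j) = some (p i' j) ∧ DCol (seg (fun r => p r j) (i + 1) i')) := by
  unfold colMatchW
  rw [col_get? p m j i (by omega), col_get? p m j i' hi', col_factor p hi hi']
  constructor
  · rintro ⟨-, -, h3 | h3, h4⟩
    · obtain ⟨ha1, ha2⟩ := h3
      simp only [Option.some.injEq] at ha1 ha2
      rw [ha1, ha2]; exact ⟨rfl, h4⟩
    · obtain ⟨ha1, ha2⟩ := h3
      simp only [Option.some.injEq] at ha1 ha2
      rw [ha1, ha2]; exact ⟨rfl, h4⟩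
  · rintro ⟨h1, h2⟩
    refine ⟨hi, by simp [col]; omega, ?_, h2⟩
    rcases hx : p i j with _ | _ | _ | _ <;> rw [hx] at h1 <;>
      simp [colPO] at h1 <;> simp [hx, ← h1]

lemma eraseN_emb_row (p : ℕ → ℕ → Del) (i lo hi : ℕ) :
    eraseN (seg (emb p i) lo hi) = seg (p i) lo hi :=
  eraseN_seg_embed (p i) lo hi

lemma eraseN_emb_col (p : ℕ → ℕ → Del) (j lo hi : ℕ) :
    eraseN (seg (fun r => emb p r j) lo hi) = seg (fun r => p r j) lo hi :=
  eraseN_seg_embed (fun r => p r j) lo hi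

lemma boxOK_iff_isRect (m n : ℕ) (p : ℕ → ℕ → Del) (i j i' j' : ℕ) :
    boxOK m n (emb p) i j i' j' ↔ IsRect m n p (i, j, i', j') := by
  unfold boxOK IsRect
  simp only []
  constructor
  · rintro ⟨h1, h2, h3, h4, ha, hb, hc, hd, f1, f2, f3, f4⟩
    simp only [emb] at ha hb hc hd
    rw [eraseN_emb_row] at f1 f2
    rw [eraseN_emb_col] at f3 f4
    have e1 := embed_eq_a ha
    have e2 := embed_eq_b hb
    have e3 := embed_eq_c hc
    have e4 := embed_eq_d hd
    refine ⟨h1, h2, h3, h4, ?_, ?_, ?_, ?_⟩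
    · rw [rowMatchW_iff p h2 h4, e1, e2]
      exact ⟨rfl, f1⟩
    · rw [rowMatchW_iff p h2 h4, e3, e4]
      exact ⟨rfl, f2⟩
    · rw [colMatchW_iff p h1 h3, e1, e3]
      exact ⟨rfl, f3⟩
    · rw [colMatchW_iff p h1 h3, e2, e4]
      exact ⟨rfl, f4⟩
  · rintro ⟨h1, h2, h3, h4, f1, f2, f3, f4⟩
    rw [rowMatchW_iff p h2 h4] at f1 f2
    rw [colMatchW_iff p h1 h3] at f3 f4
    have ea : p i j = Del.a ∧ p i j' = Del.b ∧ p i' j = Del.c ∧ p i' j' = Del.d := by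
      obtain ⟨g1, -⟩ := f1
      obtain ⟨g2, -⟩ := f2
      obtain ⟨g3, -⟩ := f3
      obtain ⟨g4, -⟩ := f4
      rcases hx : p i j with _ | _ | _ | _ <;> rw [hx] at g1 g3 <;>
        simp [rowPO, colPO] at g1 g3 <;>
      rcases hy : p i' j with _ | _ | _ | _ <;> rw [hy] at g2 <;>
        simp [rowPO] at g2 <;> simp_all
    refine ⟨h1, h2, h3, h4, ?_, ?_, ?_, ?_, ?_, ?_, ?_, ?_⟩ <;>
      first
        | (rw [eraseN_emb_row]; first | exact f1.2 | exact f2.2)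
        | (rw [eraseN_emb_col]; first | exact f3.2 | exact f4.2)
        | (show embed _ = _; rw [ea.1]; rfl)
        | (show embed _ = _; rw [ea.2.1]; rfl)
        | (show embed _ = _; rw [ea.2.2.1]; rfl)
        | (show embed _ = _; rw [ea.2.2.2]; rfl)

/-! ### DN implies DQ -/

theorem dn_dq (m n : ℕ) (p : ℕ → ℕ → Del) (h : DN m n p) : DQ m n p := by
  obtain ⟨hm, hn, qq, hred, hfin⟩ := h
  have hinv : INV m n (emb p) := inv_of_red hred hfin
  refine ⟨⟨hm, hn, ?_, ?_⟩, ?_⟩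
  · intro i hi
    have := hinv.1 i hi
    rw [eraseN_emb_row] at this
    rw [row_eq_seg]
    exact this
  · intro j hj
    have := hinv.2.1 j hj
    rw [eraseN_emb_col] at this
    rw [col_eq_seg]
    exact this
  · intro r hr s hs
    obtain ⟨i, j, i', j', hb, hc1, hc2⟩ :=
      hinv.2.2 r hr s hs (embed_ne_N _)
    exact ⟨(i, j, i', j'), (boxOK_iff_isRect m n p i j i' j').mp hb, hc1, hc2⟩

end DyckAux
namespace DyckAux

set_option linter.constructorNameAsVariable false
set_option maxHeartbeats 1000000

/-! ### Uniqueness of the rectangle at a cell -/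

lemma boxOK_p {m n : ℕ} {p : ℕ → ℕ → Del} {i j i' j' : ℕ}
    (h : boxOK m n (emb p) i j i' j') :
    p i j = Del.a ∧ p i j' = Del.b ∧ p i' j = Del.c ∧ p i' j' = Del.d ∧
    DRow (seg (p i) (j + 1) j') ∧ DRow (seg (p i') (j + 1) j') ∧
    DCol (seg (fun r => p r j) (i + 1) i') ∧
    DCol (seg (fun r => p r j') (i + 1) i') ∧ i < i' ∧ j < j' := by
  obtain ⟨h1, h2, h3, h4, ha, hb, hc, hd, f1, f2, f3, f4⟩ := h
  simp only [emb] at ha hb hc hd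
  rw [eraseN_emb_row] at f1 f2
  rw [eraseN_emb_col] at f3 f4
  exact ⟨embed_eq_a ha, embed_eq_b hb, embed_eq_c hc, embed_eq_d hd,
    f1, f2, f3, f4, h1, h2⟩

section Roles

variable {m n : ℕ} {p : ℕ → ℕ → Del} {i j i' j' r s : ℕ}

lemma role_of_a (h : boxOK m n (emb p) i j i' j')
    (hc : (r = i ∨ r = i') ∧ (s = j ∨ s = j')) (hl : p r s = Del.a) :
    r = i ∧ s = j := by
  obtain ⟨pa, pb, pc, pd, -, -, -, -, -, -⟩ := boxOK_p h
  rcases hc with ⟨h1 | h1, h2 | h2⟩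
  · exact ⟨h1, h2⟩
  · subst h1; subst h2; rw [hl] at pb; cases pb
  · subst h1; subst h2; rw [hl] at pc; cases pc
  · subst h1; subst h2; rw [hl] at pd; cases pd

lemma role_of_b (h : boxOK m n (emb p) i j i' j')
    (hc : (r = i ∨ r = i') ∧ (s = j ∨ s = j')) (hl : p r s = Del.b) :
    r = i ∧ s = j' := by
  obtain ⟨pa, pb, pc, pd, -, -, -, -, -, -⟩ := boxOK_p h
  rcases hc with ⟨h1 | h1, h2 | h2⟩
  · subst h1; subst h2; rw [hl] at pa; cases pa
  · exact ⟨h1, h2⟩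
  · subst h1; subst h2; rw [hl] at pc; cases pc
  · subst h1; subst h2; rw [hl] at pd; cases pd

lemma role_of_c (h : boxOK m n (emb p) i j i' j')
    (hc : (r = i ∨ r = i') ∧ (s = j ∨ s = j')) (hl : p r s = Del.c) :
    r = i' ∧ s = j := by
  obtain ⟨pa, pb, pc, pd, -, -, -, -, -, -⟩ := boxOK_p h
  rcases hc with ⟨h1 | h1, h2 | h2⟩
  · subst h1; subst h2; rw [hl] at pa; cases pa
  · subst h1; subst h2; rw [hl] at pb; cases pb
  · exact ⟨h1, h2⟩
  · subst h1; subst h2; rw [hl] at pd; cases pd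

lemma role_of_d (h : boxOK m n (emb p) i j i' j')
    (hc : (r = i ∨ r = i') ∧ (s = j ∨ s = j')) (hl : p r s = Del.d) :
    r = i' ∧ s = j' := by
  obtain ⟨pa, pb, pc, pd, -, -, -, -, -, -⟩ := boxOK_p h
  rcases hc with ⟨h1 | h1, h2 | h2⟩
  · subst h1; subst h2; rw [hl] at pa; cases pa
  · subst h1; subst h2; rw [hl] at pb; cases pb
  · subst h1; subst h2; rw [hl] at pc; cases pc
  · exact ⟨h1, h2⟩

end Roles

lemma rect_unique {m n : ℕ} {p : ℕ → ℕ → Del} {i j i' j' a2 b2 a2' b2' r s : ℕ}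
    (h1 : boxOK m n (emb p) i j i' j') (h2 : boxOK m n (emb p) a2 b2 a2' b2')
    (hc1 : (r = i ∨ r = i') ∧ (s = j ∨ s = j'))
    (hc2 : (r = a2 ∨ r = a2') ∧ (s = b2 ∨ s = b2')) :
    i = a2 ∧ j = b2 ∧ i' = a2' ∧ j' = b2' := by
  cases hl : p r s with
  | a =>
    obtain ⟨e1, e2⟩ := role_of_a h1 hc1 hl
    obtain ⟨e3, e4⟩ := role_of_a h2 hc2 hl
    subst e1; subst e2; subst e3; subst e4
    obtain ⟨pa, pb, pc, pd, r1, r2, c1, c2, hii, hjj⟩ := boxOK_p h1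
    obtain ⟨qa, qb, qc, qd, s1, s2, d1, d2, haa, hbb⟩ := boxOK_p h2
    refine ⟨rfl, rfl, ?_, ?_⟩
    · exact uniq_right colStep_iff colPO_closer (f := fun t => p t s) (j := r)
        (show colPO (p r s) = some (p i' s) by rw [pa, pc]; rfl) hii c1
        (show colPO (p r s) = some (p a2' s) by rw [pa, qc]; rfl) haa d1
    · exact uniq_right rowStep_iff rowPO_closer (f := p r) (j := s)
        (by rw [pa, pb]; rfl) hjj r1 (by rw [pa, qb]; rfl) hbb s1
  | b =>
    obtain ⟨e1, e2⟩ := role_of_b h1 hc1 hl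
    obtain ⟨e3, e4⟩ := role_of_b h2 hc2 hl
    subst e1; subst e2; subst e3; subst e4
    obtain ⟨pa, pb, pc, pd, r1, r2, c1, c2, hii, hjj⟩ := boxOK_p h1
    obtain ⟨qa, qb, qc, qd, s1, s2, d1, d2, haa, hbb⟩ := boxOK_p h2
    refine ⟨rfl, ?_, ?_, rfl⟩
    · exact uniq_left rowStep_iff rowPO_closer (f := p r) (j' := s)
        (by rw [pa, pb]; rfl) hjj r1 (by rw [qa, qb]; rfl) hbb s1
    · exact uniq_right colStep_iff colPO_closer (f := fun t => p t s) (j := r)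
        (show colPO (p r s) = some (p i' s) by rw [pb, pd]; rfl) hii c2
        (show colPO (p r s) = some (p a2' s) by rw [pb, qd]; rfl) haa d2
  | c =>
    obtain ⟨e1, e2⟩ := role_of_c h1 hc1 hl
    obtain ⟨e3, e4⟩ := role_of_c h2 hc2 hl
    subst e1; subst e2; subst e3; subst e4
    obtain ⟨pa, pb, pc, pd, r1, r2, c1, c2, hii, hjj⟩ := boxOK_p h1
    obtain ⟨qa, qb, qc, qd, s1, s2, d1, d2, haa, hbb⟩ := boxOK_p h2
    refine ⟨?_, rfl, rfl, ?_⟩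
    · exact uniq_left colStep_iff colPO_closer (f := fun t => p t s) (j' := r)
        (show colPO (p i s) = some (p r s) by rw [pa, pc]; rfl) hii c1
        (show colPO (p a2 s) = some (p r s) by rw [qa, qc]; rfl) haa d1
    · exact uniq_right rowStep_iff rowPO_closer (f := p r) (j := s)
        (by rw [pc, pd]; rfl) hjj r2 (by rw [qc, qd]; rfl) hbb s2
  | d =>
    obtain ⟨e1, e2⟩ := role_of_d h1 hc1 hl
    obtain ⟨e3, e4⟩ := role_of_d h2 hc2 hl
    subst e1; subst e2; subst e3; subst e4
    obtain ⟨pa, pb, pc, pd, r1, r2, c1, c2, hii, hjj⟩ := boxOK_p h1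
    obtain ⟨qa, qb, qc, qd, s1, s2, d1, d2, haa, hbb⟩ := boxOK_p h2
    refine ⟨?_, ?_, rfl, rfl⟩
    · exact uniq_left colStep_iff colPO_closer (f := fun t => p t s) (j' := r)
        (show colPO (p i s) = some (p r s) by rw [pb, pd]; rfl) hii c2
        (show colPO (p a2 s) = some (p r s) by rw [qb, qd]; rfl) haa d2
    · exact uniq_left rowStep_iff rowPO_closer (f := p r) (j' := s)
        (by rw [pc, pd]; rfl) hjj r2 (by rw [qc, qd]; rfl) hbb s2

end DyckAux
namespace DyckAux

set_option linter.constructorNameAsVariable false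
set_option maxHeartbeats 1600000

lemma chain_of_rtg {α : Type*} {R : α → α → Prop} {x y : α}
    (h : Relation.ReflTransGen R x y) :
    ∃ k : ℕ, ∃ f : ℕ → α, f 0 = x ∧ f k = y ∧ ∀ t, t < k → R (f t) (f (t + 1)) := by
  induction h with
  | refl => exact ⟨0, fun _ => x, rfl, rfl, fun t ht => absurd ht (by omega)⟩
  | @tail b c hxb hbc ih =>
    obtain ⟨k, f, h0, hk, hs⟩ := ih
    refine ⟨k + 1, fun t => if t = k + 1 then c else f t, by simp [h0], by simp, ?_⟩
    intro t ht
    by_cases he : t = k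
    · subst he
      have hgoal : R (f t) c := hk ▸ hbc
      simpa [show ¬(t = t + 1) by omega] using hgoal
    · simp only [if_neg (by omega : t ≠ k + 1), if_neg (by omega : t + 1 ≠ k + 1)]
      exact hs t (by omega)

theorem dn_acyclic (m n : ℕ) (p : ℕ → ℕ → Del) (hdn : DN m n p) :
    ∀ α, ¬ prec m n p α α := by
  classical
  obtain ⟨hm, hn, qq, hred, hfin⟩ := hdn
  obtain ⟨k, Q, hQ0, hQk, hQs⟩ := chain_of_rtg hred
  -- once a cell is neutral it stays neutral
  have mono1 : ∀ t, t < k → ∀ r s, Q t r s = DelN.N → Q (t + 1) r s = DelN.N := by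
    intro t ht r s hN
    obtain ⟨i0, j0, i0', j0', _, _, _, _, _, _, _, _, _, hin, hout⟩ := hQs t ht
    by_cases hbx : i0 ≤ r ∧ r ≤ i0' ∧ j0 ≤ s ∧ s ≤ j0'
    · exact hin r s hbx
    · rw [hout r s hbx]; exact hN
  -- prefixes of the chain are reachable
  have rtg_pref : ∀ t, t ≤ k → Relation.ReflTransGen (nstep m n) (emb p) (Q t) := by
    intro t
    induction t with
    | zero =>
      intro _
      rw [hQ0]
      exact Relation.ReflTransGen.refl
    | succ t ih =>
      intro h
      exact Relation.ReflTransGen.tail (ih (by omega)) (hQs t (by omega))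
  -- neutralization time of each cell, together with its step box
  have keyT : ∀ r s, r < m → s < n → ∃ T, 0 < T ∧ T ≤ k ∧ Q T r s = DelN.N ∧
      (∀ t, t < T → Q t r s ≠ DelN.N) ∧
      ∃ i0 j0 i0' j0', boxOK m n (emb p) i0 j0 i0' j0' ∧
        ((r = i0 ∨ r = i0') ∧ (s = j0 ∨ s = j0')) ∧
        (∀ r2 s2, i0 ≤ r2 → r2 ≤ i0' → j0 ≤ s2 → s2 ≤ j0' →
          ¬((r2 = i0 ∨ r2 = i0') ∧ (s2 = j0 ∨ s2 = j0')) →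
            Q (T - 1) r2 s2 = DelN.N) ∧
        (∀ r2 s2, i0 ≤ r2 ∧ r2 ≤ i0' ∧ j0 ≤ s2 ∧ s2 ≤ j0' →
          Q T r2 s2 = DelN.N) := by
    intro r s hr hs
    have hex : ∃ t, Q t r s = DelN.N ∧ t ≤ k :=
      ⟨k, by rw [hQk]; exact hfin r hr s hs, le_rfl⟩
    let T := Nat.find hex
    have hTN : Q T r s = DelN.N := (Nat.find_spec hex).1
    have hTk : T ≤ k := (Nat.find_spec hex).2
    have hmin : ∀ t, t < T → Q t r s ≠ DelN.N := by
      intro t ht hN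
      exact Nat.find_min hex ht ⟨hN, by omega⟩
    have hT0 : 0 < T := by
      rcases Nat.eq_zero_or_pos T with h0 | h0
      · exfalso
        rw [h0, hQ0] at hTN
        exact embed_ne_N _ hTN
      · exact h0
    have hstep' : nstep m n (Q (T - 1)) (Q T) := by
      have := hQs (T - 1) (by omega)
      rwa [show T - 1 + 1 = T by omega] at this
    obtain ⟨i0, j0, i0', j0', hbQ, hcornQ, hinQ, hintQ⟩ := (step_main hstep').2.2.2
    have hne : Q (T - 1) r s ≠ Q T r s := by
      intro he
      exact hmin (T - 1) (by omega) (by rw [he]; exact hTN)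
    have hcorn := hcornQ r s hne
    exact ⟨T, hT0, hTk, hTN, hmin, i0, j0, i0', j0',
      boxOK_of_red (rtg_pref (T - 1) (by omega)) hbQ, hcorn,
      fun r2 s2 a1 a2 a3 a4 a5 => hintQ r2 s2 a1 a2 a3 a4 a5,
      fun r2 s2 hb => hinQ r2 s2 hb⟩
  choose T hpos hle hN hmin bi bj bi' bj' hbox hcflag hpre hpost using keyT
  -- the step box of any corner of a rectangle is that rectangle itself
  have cornersN : ∀ r s (hr : r < m) (hs : s < n) i j i' j'
      (hb : boxOK m n (emb p) i j i' j')
      (hc : (r = i ∨ r = i') ∧ (s = j ∨ s = j')) r2 s2,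
      i ≤ r2 ∧ r2 ≤ i' ∧ j ≤ s2 ∧ s2 ≤ j' →
      Q (T r s hr hs) r2 s2 = DelN.N := by
    intro r s hr hs i j i' j' hb hc r2 s2 hin2
    obtain ⟨e1, e2, e3, e4⟩ :=
      rect_unique (hbox r s hr hs) hb (hcflag r s hr hs) hc
    exact hpost r s hr hs r2 s2 (by refine ⟨?_, ?_, ?_, ?_⟩ <;> omega)
  have leT : ∀ r s (hr : r < m) (hs : s < n) r2 s2 (hr2 : r2 < m) (hs2 : s2 < n),
      Q (T r s hr hs) r2 s2 = DelN.N → T r2 s2 hr2 hs2 ≤ T r s hr hs := by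
    intro r s hr hs r2 s2 hr2 hs2 hNN
    by_contra hgt
    exact hmin r2 s2 hr2 hs2 (T r s hr hs) (by omega) hNN
  have timeCorner : ∀ i j i' j' (hb : boxOK m n (emb p) i j i' j') r s
      (hc : (r = i ∨ r = i') ∧ (s = j ∨ s = j'))
      (hr : r < m) (hs : s < n) (hi : i < m) (hj : j < n),
      T r s hr hs = T i j hi hj := by
    intro i j i' j' hb r s hc hr hs hi hj
    obtain ⟨b1, b2, b3, b4, -⟩ := id hb
    apply le_antisymm
    · apply leT i j hi hj r s hr hs
      apply cornersN i j hi hj i j i' j' hb ⟨Or.inl rfl, Or.inl rfl⟩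
      rcases hc with ⟨hc1 | hc1, hc2 | hc2⟩ <;>
        exact ⟨by omega, by omega, by omega, by omega⟩
    · apply leT r s hr hs i j hi hj
      apply cornersN r s hr hs i j i' j' hb hc
      exact ⟨le_refl _, by omega, le_refl _, by omega⟩
  -- priority decreases neutralization time
  have prioT : ∀ A B, prio m n p A B →
      ∀ (hA1 : A.1 < m) (hA2 : A.2.1 < n) (hB1 : B.1 < m) (hB2 : B.2.1 < n),
      T A.1 A.2.1 hA1 hA2 < T B.1 B.2.1 hB1 hB2 := by
    rintro ⟨ai, aj, ai', aj'⟩ ⟨bi2, bj2, bi2', bj2'⟩ ⟨hRA, hRB, hnab, r, s, hcorn, hbx⟩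
      hA1 hA2 hB1 hB2
    have hbA : boxOK m n (emb p) ai aj ai' aj' :=
      (boxOK_iff_isRect m n p ai aj ai' aj').mpr hRA
    have hbB : boxOK m n (emb p) bi2 bj2 bi2' bj2' :=
      (boxOK_iff_isRect m n p bi2 bj2 bi2' bj2').mpr hRB
    have hcornA : (r = ai ∨ r = ai') ∧ (s = aj ∨ s = aj') := hcorn
    have hinB : bi2 ≤ r ∧ r ≤ bi2' ∧ bj2 ≤ s ∧ s ≤ bj2' := hbx
    obtain ⟨a1, a2, a3, a4, -⟩ := id hbA
    obtain ⟨b1, b2, b3, b4, -⟩ := id hbB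
    have hr : r < m := by rcases hcornA.1 with h | h <;> omega
    have hs : s < n := by rcases hcornA.2 with h | h <;> omega
    by_cases hcB : (r = bi2 ∨ r = bi2') ∧ (s = bj2 ∨ s = bj2')
    · exfalso
      obtain ⟨e1, e2, e3, e4⟩ := rect_unique hbA hbB hcornA hcB
      exact hnab (by rw [e1, e2, e3, e4])
    · -- the cell (r,s) is a non-corner cell of the step box of B
      obtain ⟨e1, e2, e3, e4⟩ :=
        rect_unique (hbox bi2 bj2 hB1 hB2) hbB (hcflag bi2 bj2 hB1 hB2)
          ⟨Or.inl rfl, Or.inl rfl⟩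
      have hrsN : Q (T bi2 bj2 hB1 hB2 - 1) r s = DelN.N := by
        apply hpre bi2 bj2 hB1 hB2 r s (by omega) (by omega) (by omega) (by omega)
        intro hcc
        apply hcB
        constructor
        · rcases hcc.1 with h | h <;> omega
        · rcases hcc.2 with h | h <;> omega
      have hTrs : T r s hr hs ≤ T bi2 bj2 hB1 hB2 - 1 := by
        by_contra hgt
        exact hmin r s hr hs (T bi2 bj2 hB1 hB2 - 1) (by omega) hrsN
      have hTa : T r s hr hs = T ai aj hA1 hA2 :=
        timeCorner ai aj ai' aj' hbA r s hcornA hr hs hA1 hA2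
      have := hpos bi2 bj2 hB1 hB2
      show T ai aj hA1 hA2 < T bi2 bj2 hB1 hB2
      omega
  have precT : ∀ A B, prec m n p A B → ∀ (hA1 : A.1 < m) (hA2 : A.2.1 < n)
      (hB1 : B.1 < m) (hB2 : B.2.1 < n),
      T A.1 A.2.1 hA1 hA2 < T B.1 B.2.1 hB1 hB2 := by
    intro A B hAB
    induction hAB with
    | single h => exact prioT _ _ h
    | @tail B2 C hAB2 hB2C ih =>
      intro hA1 hA2 hC1 hC2
      obtain ⟨q1, q2, q3, q4, -⟩ := id (hB2C.1)
      have hB21 : B2.1 < m := by omega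
      have hB22 : B2.2.1 < n := by omega
      exact lt_trans (ih hA1 hA2 hB21 hB22) (prioT _ _ hB2C hB21 hB22 hC1 hC2)
  intro α hα
  have hRα : IsRect m n p α := by
    cases hα with
    | single h => exact h.1
    | tail h1 h2 => exact h2.2.1
  obtain ⟨q1, q2, q3, q4, -⟩ := id hRα
  have h1 : α.1 < m := by omega
  have h2 : α.2.1 < n := by omega
  exact absurd (precT α α hα h1 h2 h1 h2) (lt_irrefl _)

end DyckAux
namespace DyckAux

set_option maxHeartbeats 1600000

def PT : List (List Del) := [[Del.a, Del.a, Del.b, Del.a, Del.b, Del.b],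
  [Del.a, Del.c, Del.d, Del.b, Del.a, Del.b],
  [Del.c, Del.a, Del.b, Del.d, Del.c, Del.d],
  [Del.a, Del.b, Del.a, Del.c, Del.d, Del.b],
  [Del.c, Del.d, Del.c, Del.a, Del.b, Del.d],
  [Del.c, Del.c, Del.d, Del.c, Del.d, Del.d]]

def P0 : ℕ → ℕ → Del := fun r s => ((PT.getD r []).getD s Del.a)

instance instDecCorner (R : ℕ × ℕ × ℕ × ℕ) (r s : ℕ) : Decidable (cornerOf R r s) := by
  unfold cornerOf; infer_instance

instance instDecInBox (R : ℕ × ℕ × ℕ × ℕ) (r s : ℕ) : Decidable (inBox R r s) := by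
  unfold inBox; infer_instance

lemma mkRM {w : List Del} {j j' : ℕ} (h1 : j < j') (h2 : j' < w.length)
    (h3 : (w[j]? = some Del.a ∧ w[j']? = some Del.b) ∨
      (w[j]? = some Del.c ∧ w[j']? = some Del.d))
    (h4 : chk rowPO 8 ((w.drop (j + 1)).take (j' - (j + 1))) = true) :
    rowMatchW w j j' :=
  ⟨h1, h2, h3, DRow_of_chk h4⟩

lemma mkCM {w : List Del} {i i' : ℕ} (h1 : i < i') (h2 : i' < w.length)
    (h3 : (w[i]? = some Del.a ∧ w[i']? = some Del.c) ∨
      (w[i]? = some Del.b ∧ w[i']? = some Del.d))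
    (h4 : chk colPO 8 ((w.drop (i + 1)).take (i' - (i + 1))) = true) :
    colMatchW w i i' :=
  ⟨h1, h2, h3, DCol_of_chk h4⟩

lemma rect0 : IsRect 6 6 P0 (0, 0, 5, 5) :=
  ⟨by decide, by decide, by decide, by decide,
    mkRM (by decide) (by decide) (by decide) (by decide),
    mkRM (by decide) (by decide) (by decide) (by decide),
    mkCM (by decide) (by decide) (by decide) (by decide),
    mkCM (by decide) (by decide) (by decide) (by decide)⟩

lemma rect1 : IsRect 6 6 P0 (0, 1, 1, 2) :=
  ⟨by decide, by decide, by decide, by decide,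
    mkRM (by decide) (by decide) (by decide) (by decide),
    mkRM (by decide) (by decide) (by decide) (by decide),
    mkCM (by decide) (by decide) (by decide) (by decide),
    mkCM (by decide) (by decide) (by decide) (by decide)⟩

lemma rect2 : IsRect 6 6 P0 (0, 3, 3, 4) :=
  ⟨by decide, by decide, by decide, by decide,
    mkRM (by decide) (by decide) (by decide) (by decide),
    mkRM (by decide) (by decide) (by decide) (by decide),
    mkCM (by decide) (by decide) (by decide) (by decide),
    mkCM (by decide) (by decide) (by decide) (by decide)⟩

lemma rect3 : IsRect 6 6 P0 (1, 0, 2, 3) :=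
  ⟨by decide, by decide, by decide, by decide,
    mkRM (by decide) (by decide) (by decide) (by decide),
    mkRM (by decide) (by decide) (by decide) (by decide),
    mkCM (by decide) (by decide) (by decide) (by decide),
    mkCM (by decide) (by decide) (by decide) (by decide)⟩

lemma rect4 : IsRect 6 6 P0 (1, 4, 2, 5) :=
  ⟨by decide, by decide, by decide, by decide,
    mkRM (by decide) (by decide) (by decide) (by decide),
    mkRM (by decide) (by decide) (by decide) (by decide),
    mkCM (by decide) (by decide) (by decide) (by decide),
    mkCM (by decide) (by decide) (by decide) (by decide)⟩

lemma rect5 : IsRect 6 6 P0 (2, 1, 5, 2) :=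
  ⟨by decide, by decide, by decide, by decide,
    mkRM (by decide) (by decide) (by decide) (by decide),
    mkRM (by decide) (by decide) (by decide) (by decide),
    mkCM (by decide) (by decide) (by decide) (by decide),
    mkCM (by decide) (by decide) (by decide) (by decide)⟩

lemma rect6 : IsRect 6 6 P0 (3, 0, 4, 1) :=
  ⟨by decide, by decide, by decide, by decide,
    mkRM (by decide) (by decide) (by decide) (by decide),
    mkRM (by decide) (by decide) (by decide) (by decide),
    mkCM (by decide) (by decide) (by decide) (by decide),
    mkCM (by decide) (by decide) (by decide) (by decide)⟩

lemma rect7 : IsRect 6 6 P0 (3, 2, 4, 5) :=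
  ⟨by decide, by decide, by decide, by decide,
    mkRM (by decide) (by decide) (by decide) (by decide),
    mkRM (by decide) (by decide) (by decide) (by decide),
    mkCM (by decide) (by decide) (by decide) (by decide),
    mkCM (by decide) (by decide) (by decide) (by decide)⟩

lemma rect8 : IsRect 6 6 P0 (4, 3, 5, 4) :=
  ⟨by decide, by decide, by decide, by decide,
    mkRM (by decide) (by decide) (by decide) (by decide),
    mkRM (by decide) (by decide) (by decide) (by decide),
    mkCM (by decide) (by decide) (by decide) (by decide),
    mkCM (by decide) (by decide) (by decide) (by decide)⟩

lemma exRows : ∀ i < 6, DRow (row P0 6 i) := by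
  intro i hi
  interval_cases i <;> exact DRow_of_chk (k := 8) (by decide)

lemma exCols : ∀ j < 6, DCol (col P0 6 j) := by
  intro j hj
  interval_cases j <;> exact DCol_of_chk (k := 8) (by decide)

lemma exDC : DC 6 6 P0 := ⟨by norm_num, by norm_num, exRows, exCols⟩

lemma exCorners : ∀ r < 6, ∀ s < 6, ∃ R, IsRect 6 6 P0 R ∧ cornerOf R r s := by
  intro r hr s hs
  interval_cases r <;> interval_cases s <;>
    first
      | exact ⟨_, rect0, by decide⟩
      | exact ⟨_, rect1, by decide⟩
      | exact ⟨_, rect2, by decide⟩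
      | exact ⟨_, rect3, by decide⟩
      | exact ⟨_, rect4, by decide⟩
      | exact ⟨_, rect5, by decide⟩
      | exact ⟨_, rect6, by decide⟩
      | exact ⟨_, rect7, by decide⟩
      | exact ⟨_, rect8, by decide⟩

lemma prioAB : prio 6 6 P0 (1, 0, 2, 3) (0, 3, 3, 4) :=
  ⟨rect3, rect2, by decide, 1, 3, by decide, by decide⟩

lemma prioBC : prio 6 6 P0 (0, 3, 3, 4) (3, 2, 4, 5) :=
  ⟨rect2, rect7, by decide, 3, 3, by decide, by decide⟩

lemma prioCD : prio 6 6 P0 (3, 2, 4, 5) (2, 1, 5, 2) :=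
  ⟨rect7, rect5, by decide, 3, 2, by decide, by decide⟩

lemma prioDA : prio 6 6 P0 (2, 1, 5, 2) (1, 0, 2, 3) :=
  ⟨rect5, rect3, by decide, 2, 1, by decide, by decide⟩

lemma precAB : prec 6 6 P0 (1, 0, 2, 3) (0, 3, 3, 4) := Relation.TransGen.single prioAB

lemma precBA : prec 6 6 P0 (0, 3, 3, 4) (1, 0, 2, 3) :=
  ((Relation.TransGen.single prioBC).tail prioCD).tail prioDA

end DyckAux

/-- DN₁ is strictly included in DQ₁: every neutralizable picture is
quaternate, but there is a quaternate picture that is not neutralizable;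
indeed one containing two rectangles α, β with α ≺ β and β ≺ α. -/
theorem DN_strictSubset_DQ :
    (∀ (m n : ℕ) (p : ℕ → ℕ → Del), DN m n p → DQ m n p) ∧
    ∃ (m n : ℕ) (p : ℕ → ℕ → Del), DQ m n p ∧ ¬ DN m n p ∧
      ∃ α β, IsRect m n p α ∧ IsRect m n p β ∧ α ≠ β ∧
        prec m n p α β ∧ prec m n p β α := by
  constructor
  · exact fun m n p h => DyckAux.dn_dq m n p h
  · refine ⟨6, 6, DyckAux.P0, ⟨DyckAux.exDC, DyckAux.exCorners⟩, ?_,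
      (1, 0, 2, 3), (0, 3, 3, 4), DyckAux.rect3, DyckAux.rect2, by decide,
      DyckAux.precAB, DyckAux.precBA⟩
    intro hdn
    exact DyckAux.dn_acyclic 6 6 DyckAux.P0 hdn (1, 0, 2, 3)
      (DyckAux.precAB.trans DyckAux.precBA)
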